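/- Let P(λ) = λᵈA_d + ⋯ + λA₁ + A₀ with d ≥ 1 be an n×n complex matrix polynomial whose coefficients A₀, …, A_d are Hermitian positive semidefinite, and assume P is regular, i.e., det P(λ₀) ≠ 0 for some λ₀ ∈ ℂ. Then the numerical range, and hence the spectrum, of P(λ) is contained in {z ∈ ℂ : |arg(z)| ≥ π/d} ∪ {0}: whenever μ ∈ ℂ and x ∈ ℂⁿ is nonzero with x*P(μ)x = 0, either μ = 0 or |arg(μ)| ≥ π/d. -/

import Mathlib

open Matrix
open scoped ComplexOrder

private lemma sum_mulVec_aux {m : Type*} [Fintype m] (s : Finset ℕ)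
    (M : ℕ → Matrix m m ℂ) (x : m → ℂ) :
    (∑ i ∈ s, M i) *ᵥ x = ∑ i ∈ s, M i *ᵥ x := by
  induction s using Finset.induction with
  | empty => simp
  | insert _ _ h ih => rw [Finset.sum_insert h, Finset.sum_insert h, Matrix.add_mulVec, ih]

private lemma dotProduct_sum_aux {m : Type*} [Fintype m] (s : Finset ℕ)
    (u : m → ℂ) (v : ℕ → m → ℂ) :
    u ⬝ᵥ (∑ i ∈ s, v i) = ∑ i ∈ s, u ⬝ᵥ v i := by
  induction s using Finset.induction with
  | empty => simp
  | insert _ _ h ih => rw [Finset.sum_insert h, Finset.sum_insert h, dotProduct_add, ih]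

/-- Theorem 5.7: let `P(λ) = λᵈ A_d + ⋯ + λ A₁ + A₀`, `d ≥ 1`, be a regular
matrix polynomial with Hermitian positive semidefinite coefficients. Then the
numerical range (and hence the spectrum) of `P(λ)` is contained in
`{z : |arg z| ≥ π/d} ∪ {0}`. -/
theorem psd_poly_numrange_arg_bound {n d : ℕ} (hd : 1 ≤ d)
    (A : ℕ → Matrix (Fin n) (Fin n) ℂ)
    (hA : ∀ i, i ≤ d → (A i).PosSemidef)
    (hreg : ∃ μ : ℂ, (∑ i ∈ Finset.range (d + 1), μ ^ i • A i).det ≠ 0)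
    (μ : ℂ) (x : Fin n → ℂ) (hx : x ≠ 0)
    (h : star x ⬝ᵥ ((∑ i ∈ Finset.range (d + 1), μ ^ i • A i) *ᵥ x) = 0) :
    μ = 0 ∨ Real.pi / d ≤ |μ.arg| := by
  by_cases hμ : μ = 0
  · exact Or.inl hμ
  right
  by_contra hlt
  push_neg at hlt
  set θ := μ.arg with hθ
  set r := ‖μ‖ with hr
  have hr0 : 0 < r := by
    rw [hr]; exact norm_pos_iff.mpr hμ
  set c : ℕ → ℂ := fun i => star x ⬝ᵥ (A i *ᵥ x) with hc
  have hcre : ∀ i ∈ Finset.range (d+1), c i = ((c i).re : ℂ) ∧ 0 ≤ (c i).re := by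
    intro i hi
    rw [Finset.mem_range] at hi
    have := (hA i (by omega)).dotProduct_mulVec_nonneg x
    rw [Complex.le_def] at this
    have him : (star x ⬝ᵥ A i *ᵥ x).im = 0 := by simpa using this.2.symm
    refine ⟨Complex.ext (by simp) (by simpa [hc] using him), by simpa [hc] using this.1⟩
  -- rewrite h as a scalar sum
  have hsum : ∑ i ∈ Finset.range (d+1), μ ^ i * c i = 0 := by
    rw [← h, sum_mulVec_aux, dotProduct_sum_aux]
    refine Finset.sum_congr rfl fun i _ => ?_
    rw [Matrix.smul_mulVec, dotProduct_smul, smul_eq_mul]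
  set φ : ℝ := d * θ / 2 with hφ
  have habs : ∀ i ∈ Finset.range (d+1), |(i : ℝ) * θ - φ| < Real.pi / 2 := by
    intro i hi
    rw [Finset.mem_range] at hi
    have hd0 : (0:ℝ) < d := by exact_mod_cast hd
    have h1 : |(i : ℝ) * θ - φ| ≤ (d / 2) * |θ| := by
      have : (i : ℝ) * θ - φ = ((i : ℝ) - d / 2) * θ := by rw [hφ]; ring
      rw [this, abs_mul]
      gcongr
      rw [abs_le]
      constructor
      · have : (0:ℝ) ≤ (i:ℝ) := by positivity
        linarith
      · have : (i : ℝ) ≤ d := by exact_mod_cast Nat.lt_succ_iff.mp hi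
        linarith
    have h2 : (d / 2) * |θ| < (d / 2) * (Real.pi / d) := by
      apply mul_lt_mul_of_pos_left hlt (by positivity)
    calc |(i : ℝ) * θ - φ| ≤ (d / 2) * |θ| := h1
      _ < (d / 2) * (Real.pi / d) := h2
      _ = Real.pi / 2 := by field_simp
  have hcos : ∀ i ∈ Finset.range (d+1), 0 < Real.cos ((i : ℝ) * θ - φ) := by
    intro i hi
    apply Real.cos_pos_of_mem_Ioo
    have := habs i hi
    rw [abs_lt] at this
    exact ⟨by linarith [this.1], this.2⟩
  -- real-part computation
  have hterm : ∀ i ∈ Finset.range (d+1),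
      (Complex.exp (-(φ:ℂ) * Complex.I) * (μ ^ i * c i)).re
        = (c i).re * (r ^ i * Real.cos ((i : ℝ) * θ - φ)) := by
    intro i hi
    have hci := (hcre i hi).1
    have hμeq : μ = (r : ℂ) * Complex.exp (θ * Complex.I) := by
      rw [hr, hθ, Complex.norm_mul_exp_arg_mul_I]
    calc (Complex.exp (-(φ:ℂ) * Complex.I) * (μ ^ i * c i)).re
        = ((((c i).re * r ^ i : ℝ) : ℂ)
            * Complex.exp ((((i : ℝ) * θ - φ : ℝ) : ℂ) * Complex.I)).re := by
          congr 1
          have he : Complex.exp ((((i : ℝ) * θ - φ : ℝ) : ℂ) * Complex.I)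
              = Complex.exp (-(φ:ℂ) * Complex.I)
                * Complex.exp ((i : ℕ) * ((θ : ℝ) * Complex.I)) := by
            rw [← Complex.exp_add]
            congr 1
            push_cast
            ring
          rw [hμeq, mul_pow, ← Complex.exp_nat_mul, he]
          nth_rewrite 1 [hci]
          push_cast
          ring
      _ = (c i).re * (r ^ i * Real.cos ((i : ℝ) * θ - φ)) := by
          rw [Complex.re_ofReal_mul, Complex.exp_ofReal_mul_I_re]
          ring
  have hsum0 : ∑ i ∈ Finset.range (d+1),
      (c i).re * (r ^ i * Real.cos ((i : ℝ) * θ - φ)) = 0 := by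
    rw [← Finset.sum_congr rfl hterm, ← Complex.re_sum, ← Finset.mul_sum, hsum,
      mul_zero, Complex.zero_re]
  have heach : ∀ i ∈ Finset.range (d+1),
      (c i).re * (r ^ i * Real.cos ((i : ℝ) * θ - φ)) = 0 := by
    refine (Finset.sum_eq_zero_iff_of_nonneg fun i hi => ?_).mp hsum0
    have := (hcre i hi).2
    have := hcos i hi
    positivity
  have hc0 : ∀ i ∈ Finset.range (d+1), c i = 0 := by
    intro i hi
    have h1 := heach i hi
    have h2 : 0 < r ^ i * Real.cos ((i : ℝ) * θ - φ) := by
      have := hcos i hi; positivity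
    have : (c i).re = 0 := by
      rcases mul_eq_zero.mp h1 with h' | h'
      · exact h'
      · exact absurd h' (ne_of_gt h2)
    rw [(hcre i hi).1, this, Complex.ofReal_zero]
  -- now all A i *ᵥ x = 0, contradicting regularity
  have hAx : ∀ i ∈ Finset.range (d+1), A i *ᵥ x = 0 := by
    intro i hi
    rw [Finset.mem_range] at hi
    exact ((hA i (by omega)).dotProduct_mulVec_zero_iff x).mp (hc0 i (by simpa using hi))
  obtain ⟨ν, hν⟩ := hreg
  apply hν
  rw [← Matrix.exists_mulVec_eq_zero_iff]
  refine ⟨x, hx, ?_⟩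
  rw [sum_mulVec_aux]
  refine Finset.sum_eq_zero fun i hi => ?_
  rw [Matrix.smul_mulVec, hAx i hi, smul_zero]
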